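/- arXiv:1107.0208 — 2 statements merged into one kernel-verified Lean document; each statement's English description precedes it below -/
import Mathlib

section
/- For every probability measure μ on ℕ = {1,2,…} with finite mean m = m₁(μ) > 1, the quantity J(μ) = log 4 − H(μ)/m − (1/m) log(m − 1) + log(1 − 1/m) is nonnegative, and J(μ) = 0 if and only if μ = 𝔊₂, the geometric distribution of parameter 1/2. -/
noncomputable section

open Real Set
def gAux (x : ℝ) : ℝ := Real.log 2 - Real.log x + (1 - x⁻¹) * Real.log (x - 1)

lemma gAux_hasDeriv {x : ℝ} (hx : 1 < x) :
    HasDerivAt gAux (Real.log (x - 1) / x ^ 2) x := by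
  have hx0 : x ≠ 0 := by linarith
  have hx1 : x - 1 ≠ 0 := by intro h; nlinarith [h]
  have h1 : HasDerivAt (fun m : ℝ => Real.log m) x⁻¹ x := Real.hasDerivAt_log hx0
  have h2 : HasDerivAt (fun m : ℝ => 1 - m⁻¹) ((x ^ 2)⁻¹) x := by
    simpa using ((hasDerivAt_inv hx0).const_sub 1)
  have h3 : HasDerivAt (fun m : ℝ => Real.log (m - 1)) ((x - 1)⁻¹) x := by
    have h := (Real.hasDerivAt_log hx1).comp x ((hasDerivAt_id x).sub_const 1)
    exact h.congr_deriv (mul_one _)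
  have h5 := ((h1.const_sub (Real.log 2)).add (h2.mul h3))
  refine h5.congr_deriv ?_
  field_simp
  ring

lemma gAux_two : gAux 2 = 0 := by
  norm_num [gAux]

lemma gAux_pos {x : ℝ} (hx : 1 < x) (hne : x ≠ 2) : 0 < gAux x := by
  rcases lt_or_gt_of_ne hne with h | h
  · -- strict anti on Ioc 1 2
    have anti : StrictAntiOn gAux (Ioc 1 2) := by
      apply strictAntiOn_of_deriv_neg (convex_Ioc 1 2)
      · intro y hy
        exact ((gAux_hasDeriv hy.1).differentiableAt).continuousAt.continuousWithinAt
      · intro y hy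
        rw [interior_Ioc] at hy
        rw [(gAux_hasDeriv hy.1).deriv]
        apply div_neg_of_neg_of_pos
        · exact Real.log_neg (by linarith [hy.1]) (by linarith [hy.2])
        · nlinarith [hy.1, hy.2]
    have := anti (by constructor <;> linarith) (by constructor <;> linarith) h
    rwa [gAux_two] at this
  · have mono : StrictMonoOn gAux (Ici 2) := by
      apply strictMonoOn_of_deriv_pos (convex_Ici 2)
      · intro y hy
        have : (1:ℝ) < y := lt_of_lt_of_le one_lt_two hy
        exact ((gAux_hasDeriv this).differentiableAt).continuousAt.continuousWithinAt
      · intro y hy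
        rw [interior_Ici] at hy
        have h1 : (1:ℝ) < y := lt_trans one_lt_two hy
        rw [(gAux_hasDeriv h1).deriv]
        apply div_pos
        · exact Real.log_pos (by simp only [mem_Ioi] at hy; linarith)
        · positivity
    have := mono (by simp : (2:ℝ) ∈ Ici 2) (by simp [mem_Ici]; linarith) h
    rwa [gAux_two] at this

lemma gibbs (p : ℕ → ℝ) (hp0 : p 0 = 0) (hpnn : ∀ k, 0 ≤ p k) (hpsum : HasSum p 1)
    (hmean : Summable fun k : ℕ => (k : ℝ) * p k)
    (m : ℝ) (hm : m = ∑' k : ℕ, (k : ℝ) * p k) (hm1 : 1 < m)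
    (hsm : Summable fun k => Real.negMulLog (p k)) :
    (∑' k, Real.negMulLog (p k)) ≤ m * Real.log m - (m - 1) * Real.log (m - 1) ∧
    ((∑' k, Real.negMulLog (p k)) = m * Real.log m - (m - 1) * Real.log (m - 1) →
      ∀ k : ℕ, 1 ≤ k → p k = m⁻¹ * ((m - 1) / m) ^ (k - 1)) := by
  have hm0 : (0:ℝ) < m := by linarith
  set θ : ℝ := (m - 1) / m with hθdef
  have hθ0 : 0 < θ := div_pos (by linarith) hm0
  have hθ1 : θ < 1 := by rw [hθdef, div_lt_one hm0]; linarith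
  set q : ℕ → ℝ := fun k => if k = 0 then 0 else m⁻¹ * θ ^ (k - 1) with hqdef
  have hqnn : ∀ k, 0 ≤ q k := by
    intro k; rw [hqdef]; dsimp only; split
    · exact le_refl 0
    · positivity
  have hqpos : ∀ k : ℕ, 1 ≤ k → 0 < q k := by
    intro k hk; rw [hqdef]; dsimp only
    rw [if_neg (by omega)]; positivity
  -- q sums to 1
  have hq : HasSum q 1 := by
    have h := (hasSum_geometric_of_lt_one hθ0.le hθ1).mul_left m⁻¹
    have h1θ : (1 - θ)⁻¹ = m := by rw [hθdef]; field_simp; ring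
    have h2 : HasSum (fun n : ℕ => q (n + 1)) 1 := by
      have he : (fun n : ℕ => q (n + 1)) = fun n : ℕ => m⁻¹ * θ ^ n := by
        funext n; simp [hqdef]
      rw [he]
      have : m⁻¹ * (1 - θ)⁻¹ = 1 := by rw [h1θ]; field_simp
      rwa [this] at h
    have := (hasSum_nat_add_iff (f := q) 1).mp h2
    simpa [hqdef] using this
  -- value of ∑ p k log (q k)
  have hlogq : ∀ k : ℕ, p k * Real.log (q k)
      = (-(Real.log m) - Real.log θ) * p k + Real.log θ * ((k : ℝ) * p k) := by
    intro k
    cases k with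
    | zero => simp [hp0]
    | succ n =>
        have : q (n + 1) = m⁻¹ * θ ^ n := by simp [hqdef]
        rw [this, Real.log_mul (by positivity) (by positivity), Real.log_pow, Real.log_inv]
        push_cast
        ring
  have hS : HasSum (fun k => p k * Real.log (q k))
      ((-(Real.log m) - Real.log θ) * 1 + Real.log θ * m) := by
    have h1 := hpsum.mul_left (-(Real.log m) - Real.log θ)
    have h2 : HasSum (fun k : ℕ => (k : ℝ) * p k) m := by
      rw [hm]; exact hmean.hasSum
    have h3 := h2.mul_left (Real.log θ)
    have := h1.add h3
    rw [funext hlogq]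
    exact this
  -- the divergence term
  set d : ℕ → ℝ := fun k => -(Real.negMulLog (p k)) - p k * Real.log (q k) - p k + q k
    with hddef
  have hd0 : ∀ k, 0 ≤ d k := by
    intro k
    rw [hddef]; dsimp only
    rcases eq_or_lt_of_le (hpnn k) with h | h
    · simp [← h, Real.negMulLog, hqnn k]
    · have hk1 : 1 ≤ k := by
        rcases Nat.eq_zero_or_pos k with rfl | hk
        · exact absurd hp0.symm h.ne
        · exact hk
      have hqk := hqpos k hk1
      have hlog := Real.log_le_sub_one_of_pos (div_pos hqk h)
      rw [Real.log_div hqk.ne' h.ne'] at hlog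
      have h2 := mul_le_mul_of_nonneg_left hlog h.le
      have h3 : p k * (q k / p k - 1) = q k - p k := by field_simp
      rw [h3] at h2
      rw [Real.negMulLog]
      nlinarith [h2]
  have hdsum : HasSum d (-(∑' k, Real.negMulLog (p k))
      - ((-(Real.log m) - Real.log θ) * 1 + Real.log θ * m) - 1 + 1) :=
    ((hsm.hasSum.neg.sub hS).sub hpsum).add hq
  have hdnn : 0 ≤ -(∑' k, Real.negMulLog (p k))
      - ((-(Real.log m) - Real.log θ) * 1 + Real.log θ * m) - 1 + 1 :=
    hasSum_le hd0 hasSum_zero hdsum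
  have hlogθ : Real.log θ = Real.log (m - 1) - Real.log m :=
    Real.log_div (by linarith) hm0.ne'
  constructor
  · rw [hlogθ] at hdnn; nlinarith [hdnn]
  · intro heq k hk
    -- total of d is 0
    have htot : (-(∑' k, Real.negMulLog (p k))
        - ((-(Real.log m) - Real.log θ) * 1 + Real.log θ * m) - 1 + 1) = 0 := by
      rw [heq, hlogθ]; ring
    rw [htot] at hdsum
    have hdk : d k = 0 := by
      have hle := hdsum.summable.le_tsum k (fun j _ => hd0 j)
      rw [hdsum.tsum_eq] at hle
      exact le_antisymm hle (hd0 k)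
    -- deduce p k = q k
    have hpq : p k = q k := by
      rcases eq_or_lt_of_le (hpnn k) with h | h
      · exfalso
        have : d k = q k := by rw [hddef]; simp [← h, Real.negMulLog]
        rw [this] at hdk
        exact (hqpos k hk).ne' hdk
      · by_contra hne
        have hqk := hqpos k hk
        have hratio : q k / p k ≠ 1 := by
          intro h1
          exact hne ((div_eq_one_iff_eq h.ne').mp h1).symm
        have hlog := Real.log_lt_sub_one_of_pos (div_pos hqk h) hratio
        rw [Real.log_div hqk.ne' h.ne'] at hlog
        have h2 := (mul_lt_mul_iff_right₀ h).mpr hlog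
        have h3 : p k * (q k / p k - 1) = q k - p k := by field_simp
        rw [h3] at h2
        rw [hddef] at hdk; dsimp only at hdk
        rw [Real.negMulLog] at hdk
        nlinarith [h2, hdk]
    rw [hpq, hqdef]
    dsimp only
    rw [if_neg (by omega)]

-- positivity of the geometric entropy
lemma Hq_pos {m : ℝ} (hm1 : 1 < m) :
    0 < m * Real.log m - (m - 1) * Real.log (m - 1) := by
  have hm0 : (0:ℝ) < m := by linarith
  have hlm : 0 < Real.log m := Real.log_pos hm1
  rcases le_or_gt (Real.log (m - 1)) 0 with h | h
  · nlinarith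
  · have hlt : Real.log (m - 1) < Real.log m :=
      Real.log_lt_log (by nlinarith [Real.log_nonpos_iff (by linarith : (0:ℝ) ≤ m - 1)]) (by linarith)
    nlinarith

/-- **Nonnegativity and uniqueness of the zero of the rate function `J`.**
For a probability measure `p` on `ℕ = {1,2,…}` (represented as a nonnegative summable
sequence with `p 0 = 0` and total mass `1`) with finite mean `m = ∑ k k·p k > 1`, the
quantity `J(p) = log 4 − H(p)/m − (1/m) log(m−1) + log(1 − 1/m)` is nonnegative, and it
vanishes iff `p` is the geometric distribution with parameter `1/2`, i.e. `p k = 2^{−k}`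
for all `k ≥ 1`. -/
theorem rateJ_nonneg_eq_zero_iff_geometric
    (p : ℕ → ℝ) (hp0 : p 0 = 0) (hpnn : ∀ k, 0 ≤ p k) (hpsum : HasSum p 1)
    (hmean : Summable fun k : ℕ => (k : ℝ) * p k)
    (m : ℝ) (hm : m = ∑' k : ℕ, (k : ℝ) * p k) (hm1 : 1 < m)
    (H : ℝ) (hH : H = ∑' k : ℕ, Real.negMulLog (p k))
    (J : ℝ)
    (hJ : J = Real.log 4 - H / m - m⁻¹ * Real.log (m - 1) + Real.log (1 - m⁻¹)) :
    0 ≤ J ∧ (J = 0 ↔ ∀ k : ℕ, 1 ≤ k → p k = (2 : ℝ)⁻¹ ^ k) := by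
  have hm0 : (0:ℝ) < m := by linarith
  set Hq : ℝ := m * Real.log m - (m - 1) * Real.log (m - 1) with hHqdef
  -- the Gibbs bound, handling the degenerate non-summable case
  have hkey : H ≤ Hq ∧ (H = Hq → ∀ k : ℕ, 1 ≤ k → p k = m⁻¹ * ((m - 1) / m) ^ (k - 1)) := by
    by_cases hsm : Summable fun k => Real.negMulLog (p k)
    · have := gibbs p hp0 hpnn hpsum hmean m hm hm1 hsm
      rw [← hH] at this
      exact this
    · rw [hH, tsum_eq_zero_of_not_summable hsm]
      refine ⟨le_of_lt (Hq_pos hm1), fun h0 => absurd h0.symm (Hq_pos hm1).ne'⟩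
  -- key algebraic identity
  have hlog4 : Real.log 4 = 2 * Real.log 2 := by
    rw [show (4:ℝ) = 2 ^ 2 by norm_num, Real.log_pow]; push_cast; ring
  have hlog1m : Real.log (1 - m⁻¹) = Real.log (m - 1) - Real.log m := by
    rw [show 1 - m⁻¹ = (m - 1) / m by field_simp, Real.log_div (by linarith) hm0.ne']
  have hkeyJ : J = 2 * gAux m + (Hq - H) / m := by
    rw [hJ, hlog4, hlog1m, gAux, hHqdef]
    field_simp
    ring
  have hg0 : 0 ≤ gAux m := by
    rcases eq_or_ne m 2 with h | h
    · rw [h, gAux_two]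
    · exact (gAux_pos hm1 h).le
  have hJ0 : 0 ≤ J := by
    rw [hkeyJ]
    have := hkey.1
    have h2 : 0 ≤ (Hq - H) / m := div_nonneg (by linarith) hm0.le
    linarith
  refine ⟨hJ0, ?_, ?_⟩
  · -- J = 0 implies geometric(1/2)
    intro hJz k hk
    have hgz : gAux m = 0 ∧ H = Hq := by
      have h2 : 0 ≤ (Hq - H) / m := div_nonneg (by linarith [hkey.1]) hm0.le
      constructor
      · nlinarith [hkeyJ, hJz, hg0, h2]
      · have : (Hq - H) / m = 0 := by nlinarith [hkeyJ, hJz, hg0, h2]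
        have := (div_eq_zero_iff.mp this).resolve_right hm0.ne'
        linarith
    have hm2 : m = 2 := by
      by_contra hne
      exact (gAux_pos hm1 hne).ne' hgz.1
    have hpk := hkey.2 hgz.2 k hk
    rw [hm2] at hpk
    have : ((2:ℝ) - 1) / 2 = 2⁻¹ := by norm_num
    rw [this] at hpk
    rw [hpk, ← pow_succ' (2⁻¹:ℝ) (k - 1)]
    congr 1
    omega
  · -- geometric(1/2) implies J = 0
    intro hgeo
    have hkp : ∀ k : ℕ, (k : ℝ) * p k = (k : ℝ) * (2⁻¹ : ℝ) ^ k := by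
      intro k
      cases k with
      | zero => simp
      | succ n => rw [hgeo (n + 1) (by omega)]
    have h2 : HasSum (fun k : ℕ => (k : ℝ) * (2⁻¹ : ℝ) ^ k) 2 := by
      have := hasSum_coe_mul_geometric_of_norm_lt_one (𝕜 := ℝ) (r := 2⁻¹)
        (by rw [Real.norm_eq_abs, abs_of_pos (by norm_num : (0:ℝ) < 2⁻¹)]; norm_num)
      have e : (2⁻¹ : ℝ) / (1 - 2⁻¹) ^ 2 = 2 := by norm_num
      rw [e] at this
      exact this
    have hm2 : m = 2 := by
      rw [hm, funext hkp, h2.tsum_eq]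
    have hnml : ∀ k : ℕ, Real.negMulLog (p k) = ((k : ℝ) * p k) * Real.log 2 := by
      intro k
      cases k with
      | zero => simp [hp0]
      | succ n =>
          rw [hgeo (n + 1) (by omega), Real.negMulLog, Real.log_pow, Real.log_inv]
          push_cast
          ring
    have hHval : H = 2 * Real.log 2 := by
      rw [hH, funext hnml, tsum_mul_right, ← hm, hm2]
    rw [hJ, hHval, hm2, hlog4]
    norm_num
    rw [show (1:ℝ)/2 = 2⁻¹ from by norm_num, Real.log_inv]
    ring


end
end

section
/- For every real λ ≥ 1, sup{ (1/m₁(p)) ∑_{n≥1} p_n log(λ / p_n) + Θ(m₁(p))/m₁(p) : p ∈ 𝔐₁¹(ℕ) } = 2 log(1 + √λ). (This identifies, via the variational support-edge formula, the maximum (1 + √λ)² of the support of the free Poisson distribution of parameter λ, whose free cumulants are k_n = λ for all n.) -/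
noncomputable section

lemma aux_geom (c r : ℝ) (h0 : 0 ≤ r) (h1 : r < 1) :
    HasSum (fun n : ℕ => if n = 0 then (0:ℝ) else c * r ^ n) (c * r / (1 - r)) := by
  have h : HasSum (fun n : ℕ => (c * r) * r ^ n) ((c * r) * (1 - r)⁻¹) :=
    (hasSum_geometric_of_lt_one h0 h1).mul_left _
  have h2 : HasSum (fun n : ℕ =>
      if n + 1 = 0 then (0:ℝ) else c * r ^ (n + 1)) (c * r * (1 - r)⁻¹) :=
    h.congr_fun (fun n => by simp [pow_succ]; ring)
  have h3 := (hasSum_nat_add_iff (f := fun k : ℕ => if k = 0 then (0:ℝ) else c * r ^ k) 1).mp h2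
  simpa [div_eq_mul_inv] using h3

lemma aux_theta_core (s t : ℝ) (hs : 1 ≤ s) (ht : 0 < t) :
    (t + 1) * Real.log (t + 1) - t * Real.log t - (t + 1) * Real.log (1 + s)
      + Real.log s ≤ 0 := by
  have hs0 : (0:ℝ) < s := lt_of_lt_of_le one_pos hs
  have hB : (0:ℝ) < 1 + s := by linarith
  have ht1 : (0:ℝ) < t + 1 := by linarith
  have h1 : Real.log ((t + 1) / (t * (1 + s))) ≤ (t + 1) / (t * (1 + s)) - 1 :=
    Real.log_le_sub_one_of_pos (by positivity)
  have h2 : Real.log ((t + 1) * s / (1 + s)) ≤ (t + 1) * s / (1 + s) - 1 :=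
    Real.log_le_sub_one_of_pos (by positivity)
  have e1 : Real.log ((t + 1) / (t * (1 + s))) =
      Real.log (t + 1) - Real.log t - Real.log (1 + s) := by
    rw [Real.log_div (by positivity) (by positivity), Real.log_mul (ne_of_gt ht) (ne_of_gt hB)]
    ring
  have e2 : Real.log ((t + 1) * s / (1 + s)) =
      Real.log (t + 1) + Real.log s - Real.log (1 + s) := by
    rw [Real.log_div (by positivity) (ne_of_gt hB), Real.log_mul (ne_of_gt ht1) (ne_of_gt hs0)]
  rw [e1] at h1; rw [e2] at h2
  have key : t * (Real.log (t + 1) - Real.log t - Real.log (1 + s))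
      + (Real.log (t + 1) + Real.log s - Real.log (1 + s))
      ≤ t * ((t + 1) / (t * (1 + s)) - 1) + ((t + 1) * s / (1 + s) - 1) := by
    have := mul_le_mul_of_nonneg_left h1 (le_of_lt ht)
    linarith
  have rhs0 : t * ((t + 1) / (t * (1 + s)) - 1) + ((t + 1) * s / (1 + s) - 1) = 0 := by
    field_simp
    ring
  nlinarith [key]

/-- `Θ(m) = log(m−1) − m log(1−1/m)`. -/
def Theta (m : ℝ) : ℝ := Real.log (m - 1) - m * Real.log (1 - m⁻¹)

lemma aux_theta (s m : ℝ) (hs : 1 ≤ s) (hm : 1 ≤ m) :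
    Theta m ≤ m * Real.log (1 + s) - Real.log s := by
  have hs0 : (0:ℝ) < s := lt_of_lt_of_le one_pos hs
  rcases eq_or_lt_of_le hm with h | h
  · have h0 : Theta m = 0 := by
      rw [← h]; simp [Theta]
    rw [h0, ← h]
    have : Real.log s ≤ Real.log (1 + s) := Real.log_le_log hs0 (by linarith)
    linarith
  · have ht : (0:ℝ) < m - 1 := by linarith
    have hm0 : (0:ℝ) < m := by linarith
    have e : 1 - m⁻¹ = (m - 1) / m := by field_simp
    have hcore := aux_theta_core s (m - 1) hs ht
    rw [show m - 1 + 1 = m by ring] at hcore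
    unfold Theta
    rw [e, Real.log_div (ne_of_gt ht) (ne_of_gt hm0)]
    nlinarith [hcore]

/-- **The support edge of the free Poisson distribution via the variational formula.**
For `λ ≥ 1`, the supremum over probability measures `p` on `{1,2,…}` with finite mean
`m₁(p)` of `(1/m₁(p)) ∑_{n≥1} p_n log(λ/p_n) + Θ(m₁(p))/m₁(p)` equals `2 log(1+√λ)`,
the logarithm of the right edge `(1+√λ)²` of the support of the free Poisson law of
parameter `λ` (whose free cumulants are `k_n = λ` for all `n`). -/
theorem freePoisson_edge_variational (lam : ℝ) (hlam : 1 ≤ lam) :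
    sSup {v : ℝ | ∃ p : ℕ → ℝ, (∀ k, 0 ≤ p k) ∧ p 0 = 0 ∧ HasSum p 1 ∧
        Summable (fun n : ℕ => (n : ℝ) * p n) ∧
        Summable (fun n : ℕ => p n * Real.log (lam / p n)) ∧
        v = (∑' n : ℕ, (n : ℝ) * p n)⁻¹ * (∑' n : ℕ, p n * Real.log (lam / p n))
            + Theta (∑' n : ℕ, (n : ℝ) * p n) / (∑' n : ℕ, (n : ℝ) * p n)} =
      2 * Real.log (1 + Real.sqrt lam) := by
  have hs1 : 1 ≤ Real.sqrt lam := by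
    rw [show (1:ℝ) = Real.sqrt 1 by simp]
    exact Real.sqrt_le_sqrt hlam
  set s := Real.sqrt lam with hs_def
  have hs0 : (0:ℝ) < s := lt_of_lt_of_le one_pos hs1
  have hB0 : (0:ℝ) < 1 + s := by linarith
  have hlam_eq : lam = s * s := (Real.mul_self_sqrt (by linarith)).symm
  have hlam0 : (0:ℝ) < lam := by nlinarith
  have hr0 : (0:ℝ) ≤ (1 + s)⁻¹ := by positivity
  have hr1 : (1 + s)⁻¹ < 1 := by
    rw [inv_lt_one_iff₀]; right; linarith
  -- the geometric witness sum
  have hgeo : HasSum (fun n : ℕ => if n = 0 then (0:ℝ) else s * ((1 + s)⁻¹) ^ n) 1 := by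
    have h := aux_geom s (1 + s)⁻¹ hr0 hr1
    have e : s * (1 + s)⁻¹ / (1 - (1 + s)⁻¹) = 1 := by
      rw [show 1 - (1 + s)⁻¹ = s / (1 + s) by field_simp; ring]
      field_simp
    rwa [e] at h
  -- Upper bound
  have hub : ∀ v ∈ {v : ℝ | ∃ p : ℕ → ℝ, (∀ k, 0 ≤ p k) ∧ p 0 = 0 ∧ HasSum p 1 ∧
        Summable (fun n : ℕ => (n : ℝ) * p n) ∧
        Summable (fun n : ℕ => p n * Real.log (lam / p n)) ∧
        v = (∑' n : ℕ, (n : ℝ) * p n)⁻¹ * (∑' n : ℕ, p n * Real.log (lam / p n))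
            + Theta (∑' n : ℕ, (n : ℝ) * p n) / (∑' n : ℕ, (n : ℝ) * p n)},
      v ≤ 2 * Real.log (1 + s) := by
    rintro v ⟨p, hpos, hp0, hp1, hmean, hlog, rfl⟩
    set m := ∑' n : ℕ, (n : ℝ) * p n with hm_def
    have hm1 : 1 ≤ m := by
      have hle : ∀ n : ℕ, p n ≤ (n : ℝ) * p n := by
        intro n
        cases n with
        | zero => simp [hp0]
        | succ k =>
          have h1 : (1:ℝ) ≤ ((k+1 : ℕ) : ℝ) := by exact_mod_cast Nat.succ_le_succ (Nat.zero_le k)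
          nlinarith [hpos (k+1)]
      calc (1:ℝ) = ∑' n, p n := hp1.tsum_eq.symm
      _ ≤ m := Summable.tsum_le_tsum hle hp1.summable hmean
    have hm0 : (0:ℝ) < m := by linarith
    have hmean' : HasSum (fun n : ℕ => (n : ℝ) * p n) m := hmean.hasSum
    -- the comparison sequence q
    have hq : HasSum (fun n : ℕ => p n * Real.log s + ((n : ℝ) * p n) * Real.log (1 + s)
        + (if n = 0 then (0:ℝ) else s * ((1 + s)⁻¹) ^ n) - p n)
        (Real.log s + m * Real.log (1 + s)) := by
      have h3 := (((hp1.mul_right (Real.log s)).add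
        (hmean'.mul_right (Real.log (1 + s)))).add hgeo).sub hp1
      rw [show Real.log s + m * Real.log (1 + s)
          = 1 * Real.log s + m * Real.log (1 + s) + 1 - 1 by ring]
      exact h3
    -- pointwise bound
    have hpt : ∀ n : ℕ, p n * Real.log (lam / p n) ≤ p n * Real.log s
        + ((n : ℝ) * p n) * Real.log (1 + s)
        + (if n = 0 then (0:ℝ) else s * ((1 + s)⁻¹) ^ n) - p n := by
      intro n
      cases n with
      | zero => simp [hp0]
      | succ k =>
        have hk : (k + 1 : ℕ) ≠ 0 := Nat.succ_ne_zero k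
        rw [if_neg hk]
        rcases eq_or_lt_of_le (hpos (k+1)) with h | h
        · rw [← h]
          have : (0:ℝ) ≤ s * ((1 + s)⁻¹) ^ (k+1) := by positivity
          simpa using this
        · have hBpow : (0:ℝ) < (1 + s) ^ (k+1) := by positivity
          have key : Real.log (lam / p (k+1)) ≤ Real.log s + ((k+1 : ℕ) : ℝ) * Real.log (1 + s)
              + (lam / (p (k+1) * (s * (1 + s) ^ (k+1))) - 1) := by
            have e : lam / p (k+1) = (s * (1 + s) ^ (k+1))
                * (lam / (p (k+1) * (s * (1 + s) ^ (k+1)))) := by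
              field_simp
            rw [e, Real.log_mul (by positivity) (by positivity),
              Real.log_mul (ne_of_gt hs0) (ne_of_gt hBpow), Real.log_pow]
            have hlog2 := Real.log_le_sub_one_of_pos
              (x := lam / (p (k+1) * (s * (1 + s) ^ (k+1)))) (by positivity)
            linarith
          have hmul := mul_le_mul_of_nonneg_left key (le_of_lt h)
          have e2 : p (k+1) * (lam / (p (k+1) * (s * (1 + s) ^ (k+1))))
              = s * ((1 + s)⁻¹) ^ (k+1) := by
            rw [hlam_eq, inv_pow]
            field_simp
          have expand : p (k+1) * (Real.log s + ((k+1 : ℕ) : ℝ) * Real.log (1 + s)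
              + (lam / (p (k+1) * (s * (1 + s) ^ (k+1))) - 1))
              = p (k+1) * Real.log s + (((k+1 : ℕ) : ℝ) * p (k+1)) * Real.log (1 + s)
                + s * ((1 + s)⁻¹) ^ (k+1) - p (k+1) := by
            rw [mul_add, mul_add, mul_sub, mul_one, e2]
            ring
          rw [expand] at hmul
          exact hmul
    have hS : (∑' n : ℕ, p n * Real.log (lam / p n))
        ≤ Real.log s + m * Real.log (1 + s) := by
      calc (∑' n : ℕ, p n * Real.log (lam / p n))
          ≤ ∑' n : ℕ, (p n * Real.log s + ((n : ℝ) * p n) * Real.log (1 + s)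
            + (if n = 0 then (0:ℝ) else s * ((1 + s)⁻¹) ^ n) - p n) :=
        Summable.tsum_le_tsum hpt hlog hq.summable
      _ = Real.log s + m * Real.log (1 + s) := hq.tsum_eq
    have hT := aux_theta s m hs1 hm1
    have h1 : m⁻¹ * (∑' n : ℕ, p n * Real.log (lam / p n))
        ≤ m⁻¹ * (Real.log s + m * Real.log (1 + s)) :=
      mul_le_mul_of_nonneg_left hS (by positivity)
    have h2 : Theta m / m ≤ (m * Real.log (1 + s) - Real.log s) / m := by
      gcongr
    calc m⁻¹ * (∑' n : ℕ, p n * Real.log (lam / p n)) + Theta m / m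
        ≤ m⁻¹ * (Real.log s + m * Real.log (1 + s))
          + (m * Real.log (1 + s) - Real.log s) / m := add_le_add h1 h2
    _ = 2 * Real.log (1 + s) := by field_simp; ring
  -- Witness: the optimal geometric distribution
  have hmem : 2 * Real.log (1 + s) ∈ {v : ℝ | ∃ p : ℕ → ℝ, (∀ k, 0 ≤ p k) ∧ p 0 = 0 ∧
        HasSum p 1 ∧
        Summable (fun n : ℕ => (n : ℝ) * p n) ∧
        Summable (fun n : ℕ => p n * Real.log (lam / p n)) ∧
        v = (∑' n : ℕ, (n : ℝ) * p n)⁻¹ * (∑' n : ℕ, p n * Real.log (lam / p n))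
            + Theta (∑' n : ℕ, (n : ℝ) * p n) / (∑' n : ℕ, (n : ℝ) * p n)} := by
    have hnorm : ‖(1 + s)⁻¹‖ < 1 := by
      rw [Real.norm_eq_abs, abs_of_nonneg hr0]; exact hr1
    have hmean_w : HasSum (fun n : ℕ => (n : ℝ) *
        (if n = 0 then (0:ℝ) else s * ((1 + s)⁻¹) ^ n)) (1 + s⁻¹) := by
      have base := (hasSum_coe_mul_geometric_of_norm_lt_one hnorm).mul_left s
      have e : s * ((1 + s)⁻¹ / (1 - (1 + s)⁻¹) ^ 2) = 1 + s⁻¹ := by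
        rw [show 1 - (1 + s)⁻¹ = s / (1 + s) by field_simp; ring]
        field_simp
        ring
      rw [e] at base
      refine base.congr_fun fun n => ?_
      cases n with
      | zero => simp
      | succ k => rw [if_neg (Nat.succ_ne_zero k)]; ring
    have hlog_w : HasSum (fun n : ℕ =>
        (if n = 0 then (0:ℝ) else s * ((1 + s)⁻¹) ^ n)
          * Real.log (lam / (if n = 0 then (0:ℝ) else s * ((1 + s)⁻¹) ^ n)))
        (Real.log s + (1 + s⁻¹) * Real.log (1 + s)) := by
      have h := (hgeo.mul_right (Real.log s)).add (hmean_w.mul_right (Real.log (1 + s)))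
      rw [one_mul] at h
      refine h.congr_fun fun n => ?_
      cases n with
      | zero => simp
      | succ k =>
        rw [if_neg (Nat.succ_ne_zero k)]
        have hpow : (0:ℝ) < (1 + s) ^ (k+1) := by positivity
        have e : lam / (s * ((1 + s)⁻¹) ^ (k+1)) = s * (1 + s) ^ (k+1) := by
          rw [hlam_eq, inv_pow]
          field_simp
        rw [e, Real.log_mul (ne_of_gt hs0) (ne_of_gt hpow), Real.log_pow]
        ring
    refine ⟨fun n => if n = 0 then (0:ℝ) else s * ((1 + s)⁻¹) ^ n,
      fun k => ?_, by simp, hgeo, hmean_w.summable, hlog_w.summable, ?_⟩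
    · dsimp only
      split <;> positivity
    · rw [hmean_w.tsum_eq, hlog_w.tsum_eq]
      have ha : (0:ℝ) < 1 + s⁻¹ := by positivity
      have hth : Theta (1 + s⁻¹) = -Real.log s + (1 + s⁻¹) * Real.log (1 + s) := by
        unfold Theta
        rw [show (1 + s⁻¹) - 1 = s⁻¹ by ring, Real.log_inv,
          show 1 - (1 + s⁻¹)⁻¹ = (1 + s)⁻¹ by field_simp; ring, Real.log_inv]
        ring
      rw [hth]
      field_simp
      ring
  exact le_antisymm (csSup_le ⟨_, hmem⟩ hub) (le_csSup ⟨_, hub⟩ hmem)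

end
end
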